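/- Let n ≥ 3 and assume condition (ON). For any two vertices S, W of G(V), there exists a walk of length 3 from S to W in G(V) if and only if (K does not have exactly 4 elements, or n ≠ 3, or S + W is non-degenerate). -/

import Mathlib

namespace FramePaper

variable {K : Type*} [Field K]

/-- The standard Hermitian form `Ψ(v,w) = ∑ i, v i * τ (w i)` on `Fin n → K`. -/
def Psi (τ : K → K) {n : ℕ} (v w : Fin n → K) : K :=
  ∑ i, v i * τ (w i)

lemma Psi_add_left (τ : K → K) {n : ℕ} (a b w : Fin n → K) :
    Psi τ (a + b) w = Psi τ a w + Psi τ b w := by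
  simp [Psi, add_mul, Finset.sum_add_distrib]

lemma Psi_smul_left (τ : K → K) {n : ℕ} (c : K) (a w : Fin n → K) :
    Psi τ (c • a) w = c * Psi τ a w := by
  simp [Psi, Finset.mul_sum, mul_assoc]

/-- The orthogonal complement `S^⊥ = {v | ∀ s ∈ S, Ψ(v,s) = 0}`. -/
def perp (τ : K → K) {n : ℕ} (S : Submodule K (Fin n → K)) :
    Submodule K (Fin n → K) where
  carrier := {v | ∀ s ∈ S, Psi τ v s = 0}
  add_mem' := by
    intro a b ha hb
    show ∀ s ∈ S, Psi τ (a + b) s = 0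
    intro s hs
    rw [Psi_add_left, ha s hs, hb s hs, add_zero]
  zero_mem' := by
    show ∀ s ∈ S, Psi τ 0 s = 0
    intro s hs
    simp [Psi]
  smul_mem' := by
    intro c a ha
    show ∀ s ∈ S, Psi τ (c • a) s = 0
    intro s hs
    rw [Psi_smul_left, ha s hs, mul_zero]

/-- A subspace `S` is non-degenerate iff `S ⊓ S^⊥ = ⊥`. -/
def Nondeg (τ : K → K) {n : ℕ} (S : Submodule K (Fin n → K)) : Prop :=
  S ⊓ perp τ S = ⊥

/-- Vertices of `G(V)`: the `1`-dimensional non-degenerate subspaces. -/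
def IsVertex (τ : K → K) {n : ℕ} (S : Submodule K (Fin n → K)) : Prop :=
  Module.finrank K S = 1 ∧ Nondeg τ S

/-- The graph `G(V)` on the `1`-dimensional non-degenerate subspaces of `V = Fin n → K`,
with `S, W` adjacent iff `S ≠ W` and `Ψ(s,w) = 0` for all `s ∈ S`, `w ∈ W`. -/
def FrameGraph (τ : K →+* K) (hτ2 : ∀ x, τ (τ x) = x) (n : ℕ) :
    SimpleGraph {S : Submodule K (Fin n → K) // IsVertex (⇑τ) S} where
  Adj S W := S ≠ W ∧ ∀ s ∈ S.1, ∀ w ∈ W.1, Psi (⇑τ) s w = 0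
  symm := ⟨by
    rintro S W ⟨hne, h⟩
    refine ⟨hne.symm, fun w hw s hs => ?_⟩
    have key : Psi (⇑τ) w s = τ (Psi (⇑τ) s w) := by
      simp only [Psi, map_sum, map_mul, hτ2]
      exact Finset.sum_congr rfl fun i _ => mul_comm _ _
    rw [key, h s hs w hw, map_zero]⟩
  loopless := ⟨fun S h => h.1 rfl⟩

section Helpers

open Module Submodule LinearMap

variable (τ : K →+* K) {n : ℕ}

lemma Psi_comm (hτ2 : ∀ x, τ (τ x) = x) (v w : Fin n → K) :
    Psi (⇑τ) v w = τ (Psi (⇑τ) w v) := by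
  simp only [Psi, map_sum, map_mul, hτ2]
  exact Finset.sum_congr rfl fun i _ => mul_comm _ _

lemma Psi_add_right (v a b : Fin n → K) :
    Psi (⇑τ) v (a + b) = Psi (⇑τ) v a + Psi (⇑τ) v b := by
  simp [Psi, mul_add, Finset.sum_add_distrib]

lemma Psi_smul_right (c : K) (v w : Fin n → K) :
    Psi (⇑τ) v (c • w) = τ c * Psi (⇑τ) v w := by
  simp only [Psi, Pi.smul_apply, smul_eq_mul, map_mul, Finset.mul_sum]
  exact Finset.sum_congr rfl fun i _ => by ring

lemma Psi_zero_left (w : Fin n → K) : Psi (⇑τ) 0 w = 0 := by simp [Psi]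

lemma Psi_zero_right (v : Fin n → K) : Psi (⇑τ) v 0 = 0 := by simp [Psi]

lemma Psi_neg_left (a w : Fin n → K) : Psi (⇑τ) (-a) w = -Psi (⇑τ) a w := by
  rw [← neg_one_smul K a, Psi_smul_left]; ring

lemma Psi_sub_left (a b w : Fin n → K) :
    Psi (⇑τ) (a - b) w = Psi (⇑τ) a w - Psi (⇑τ) b w := by
  rw [sub_eq_add_neg, Psi_add_left, Psi_neg_left]; ring

lemma Psi_neg_right (v a : Fin n → K) : Psi (⇑τ) v (-a) = -Psi (⇑τ) v a := by
  rw [← neg_one_smul K a, Psi_smul_right]; simp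

lemma Psi_sub_right (v a b : Fin n → K) :
    Psi (⇑τ) v (a - b) = Psi (⇑τ) v a - Psi (⇑τ) v b := by
  rw [sub_eq_add_neg, Psi_add_right, Psi_neg_right]; ring

/-- right linear functional `v ↦ Ψ(v, w)`. -/
def psiR (w : Fin n → K) : (Fin n → K) →ₗ[K] K where
  toFun v := Psi (⇑τ) v w
  map_add' a b := Psi_add_left _ a b w
  map_smul' c a := Psi_smul_left _ c a w

@[simp] lemma psiR_apply (w v : Fin n → K) : psiR τ w v = Psi (⇑τ) v w := rfl

lemma mem_ker_psiR {w v : Fin n → K} : v ∈ ker (psiR τ w) ↔ Psi (⇑τ) v w = 0 := by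
  simp [LinearMap.mem_ker]

lemma eq_zero_of_forall_psi_right (v : Fin n → K)
    (h : ∀ w, Psi (⇑τ) v w = 0) : v = 0 := by
  funext j
  have := h (Pi.single j 1)
  simp only [Psi, Pi.single_apply] at this
  rw [Finset.sum_eq_single j] at this
  · simpa using this
  · intro i _ hij; simp [hij]
  · simp

lemma eq_zero_of_forall_psi_left (hτ2 : ∀ x, τ (τ x) = x) (w : Fin n → K)
    (h : ∀ v, Psi (⇑τ) v w = 0) : w = 0 := by
  funext j
  have := h (Pi.single j 1)
  simp only [Psi, Pi.single_apply] at this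
  rw [Finset.sum_eq_single j] at this
  · simp only [if_pos rfl, one_mul] at this
    have h2 := congrArg τ this
    rw [map_zero, map_mul, hτ2] at h2
    simpa using h2
  · intro i _ hij; simp [hij]
  · simp

lemma psiR_ne_zero (hτ2 : ∀ x, τ (τ x) = x) {w : Fin n → K} (hw : w ≠ 0) :
    psiR τ w ≠ 0 := by
  intro h
  apply hw
  apply eq_zero_of_forall_psi_left τ hτ2
  intro v
  have := congrFun (congrArg (fun f => f.toFun) h) v
  simpa using this

lemma finrank_ker_psiR (hτ2 : ∀ x, τ (τ x) = x) {w : Fin n → K} (hw : w ≠ 0) :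
    finrank K (ker (psiR τ w)) + 1 = n := by
  have hf : psiR τ w ≠ 0 := psiR_ne_zero τ hτ2 hw
  have h1 : range (psiR τ w) = ⊤ := by
    rw [LinearMap.range_eq_top]
    obtain ⟨x, hx⟩ : ∃ x, psiR τ w x ≠ 0 := by
      by_contra h; push_neg at h; exact hf (LinearMap.ext fun v => by simpa using h v)
    intro c
    exact ⟨(c * (psiR τ w x)⁻¹) • x, by
      have hx' : Psi (⇑τ) x w ≠ 0 := by simpa using hx
      simp only [map_smul, smul_eq_mul, psiR_apply]
      field_simp⟩
  have h2 := LinearMap.finrank_range_add_finrank_ker (psiR τ w)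
  rw [h1, finrank_top, Module.finrank_self, Module.finrank_fin_fun] at h2
  omega

lemma finrank_sup_of_inf_eq_bot {V : Type*} [AddCommGroup V] [Module K V]
    [FiniteDimensional K V] {p q : Submodule K V} (h : p ⊓ q = ⊥) :
    finrank K ↑(p ⊔ q) = finrank K p + finrank K q := by
  have := Submodule.finrank_sup_add_finrank_inf_eq p q
  rw [h] at this
  simpa using this

/-- A subspace on which the norm vanishes is totally isotropic. -/
lemma psi_eq_zero_of_isotropic (hτne : (⇑τ : K → K) ≠ id) (hτ2 : ∀ x, τ (τ x) = x)
    {U : Submodule K (Fin n → K)} (h : ∀ x ∈ U, Psi (⇑τ) x x = 0) :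
    ∀ x ∈ U, ∀ y ∈ U, Psi (⇑τ) x y = 0 := by
  obtain ⟨u₀, hu₀⟩ := Function.ne_iff.mp hτne
  have hu₀ : τ u₀ ≠ u₀ := hu₀
  intro x hx y hy
  set z := Psi (⇑τ) x y with hz
  have hyx : Psi (⇑τ) y x = τ z := Psi_comm τ hτ2 y x
  have h1 : z + τ z = 0 := by
    have := h _ (add_mem hx hy)
    rw [Psi_add_left, Psi_add_right, Psi_add_right, h _ hx, h _ hy, hyx] at this
    linear_combination this
  have h2 : τ u₀ * z + u₀ * τ z = 0 := by
    have := h _ (add_mem hx (U.smul_mem u₀ hy))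
    rw [Psi_add_left, Psi_add_right, Psi_add_right, Psi_smul_left, Psi_smul_left,
      Psi_smul_right, Psi_smul_right, h _ hx, h _ hy, hyx] at this
    linear_combination this
  have hτz : τ z = -z := by linear_combination h1
  rw [hτz] at h2
  have hz0 : (τ u₀ - u₀) * z = 0 := by linear_combination h2
  rcases mul_eq_zero.mp hz0 with h' | h'
  · exact absurd (sub_eq_zero.mp h') hu₀
  · exact h'

lemma exists_smul_of_ker_psiR_eq (hτ2 : ∀ x, τ (τ x) = x) {x y : Fin n → K} (hx : x ≠ 0)
    (hker : ker (psiR τ x) = ker (psiR τ y)) : ∃ c : K, y = c • x := by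
  obtain ⟨v₀, hv₀⟩ : ∃ v₀, Psi (⇑τ) v₀ x ≠ 0 := by
    by_contra hcon; push_neg at hcon
    exact hx (eq_zero_of_forall_psi_left τ hτ2 x hcon)
  set c := Psi (⇑τ) v₀ y * (Psi (⇑τ) v₀ x)⁻¹ with hc
  have key : ∀ v, Psi (⇑τ) v y = c * Psi (⇑τ) v x := by
    intro v
    have hmem : v - (Psi (⇑τ) v x * (Psi (⇑τ) v₀ x)⁻¹) • v₀ ∈ ker (psiR τ x) := by
      rw [mem_ker_psiR, Psi_sub_left, Psi_smul_left]
      field_simp; ring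
    rw [hker, mem_ker_psiR, Psi_sub_left, Psi_smul_left] at hmem
    have := sub_eq_zero.mp hmem
    rw [this, hc]; field_simp
  refine ⟨τ c, ?_⟩
  have : ∀ v, Psi (⇑τ) v (y - τ c • x) = 0 := by
    intro v
    rw [Psi_sub_right, Psi_smul_right, hτ2, key v]
    ring
  have := eq_zero_of_forall_psi_left τ hτ2 _ this
  rw [sub_eq_zero] at this
  exact this

lemma finrank_le_one_of_isotropic (hτne : (⇑τ : K → K) ≠ id) (hτ2 : ∀ x, τ (τ x) = x)
    {s : Fin n → K} {U : Submodule K (Fin n → K)}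
    (hs : Psi (⇑τ) s s ≠ 0) (hUs : ∀ x ∈ U, Psi (⇑τ) x s = 0)
    (hiso : ∀ x ∈ U, Psi (⇑τ) x x = 0) (hdim : n ≤ finrank K U + 2) :
    finrank K U ≤ 1 := by
  classical
  by_contra hcon
  push_neg at hcon
  have h2le : 2 ≤ finrank K U := hcon
  have htot := psi_eq_zero_of_isotropic τ hτne hτ2 hiso
  -- pick x ≠ 0 in U
  obtain ⟨x, hxU, hx0⟩ : ∃ x ∈ U, x ≠ 0 := by
    apply Submodule.exists_mem_ne_zero_of_ne_bot
    intro hbot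
    rw [hbot] at h2le
    simp [finrank_bot] at h2le
  -- pick y in U outside span x
  have hspanx : Submodule.span K {x} < U := by
    rcases lt_or_eq_of_le ((Submodule.span_singleton_le_iff_mem x U).mpr hxU) with h | h
    · exact h
    · rw [← h] at h2le
      rw [finrank_span_singleton hx0] at h2le
      omega
  obtain ⟨y, hyU, hyx⟩ := SetLike.exists_of_lt hspanx
  have hy0 : y ≠ 0 := by rintro rfl; exact hyx (Submodule.zero_mem _)
  set E := ker (psiR τ x) ⊓ ker (psiR τ y) with hE
  -- U ⊔ span s ≤ E
  have hsupE : U ⊔ Submodule.span K {s} ≤ E := by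
    apply sup_le
    · intro z hz
      rw [hE, Submodule.mem_inf]
      exact ⟨mem_ker_psiR τ |>.mpr (htot z hz x hxU), mem_ker_psiR τ |>.mpr (htot z hz y hyU)⟩
    · rw [Submodule.span_singleton_le_iff_mem, hE, Submodule.mem_inf]
      constructor
      · rw [mem_ker_psiR, Psi_comm τ hτ2, hUs x hxU, map_zero]
      · rw [mem_ker_psiR, Psi_comm τ hτ2, hUs y hyU, map_zero]
  -- disjointness
  have hdisj : U ⊓ Submodule.span K {s} = ⊥ := by
    rw [eq_bot_iff]
    rintro z ⟨hzU, hzs⟩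
    obtain ⟨c, rfl⟩ := Submodule.mem_span_singleton.mp hzs
    have := hUs _ hzU
    rw [Psi_smul_left] at this
    rcases mul_eq_zero.mp this with h | h
    · simp [h]
    · exact absurd h hs
  have hrk1 : finrank K ↑(U ⊔ Submodule.span K {s}) = finrank K U + 1 := by
    have hs0 : s ≠ 0 := by rintro rfl; exact hs (Psi_zero_left τ 0)
    rw [finrank_sup_of_inf_eq_bot hdisj, finrank_span_singleton hs0]
  -- sup of the two kernels is ⊤
  have hkerx := finrank_ker_psiR τ hτ2 hx0
  have hkery := finrank_ker_psiR τ hτ2 hy0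
  have hsuptop : ker (psiR τ x) ⊔ ker (psiR τ y) = ⊤ := by
    by_contra htop
    have hlt : finrank K ↑(ker (psiR τ x) ⊔ ker (psiR τ y)) < n := by
      have := Submodule.finrank_lt htop
      rwa [Module.finrank_fin_fun] at this
    have hex : ker (psiR τ x) = ker (psiR τ x) ⊔ ker (psiR τ y) := by
      apply Submodule.eq_of_le_of_finrank_le le_sup_left
      omega
    have hey : ker (psiR τ y) = ker (psiR τ x) ⊔ ker (psiR τ y) := by
      apply Submodule.eq_of_le_of_finrank_le le_sup_right
      omega
    obtain ⟨c, rfl⟩ := exists_smul_of_ker_psiR_eq τ hτ2 hx0 (hex.trans hey.symm)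
    exact hyx (Submodule.mem_span_singleton.mpr ⟨c, rfl⟩)
  have hfE : finrank K ↑E + 2 = n := by
    have := Submodule.finrank_sup_add_finrank_inf_eq (ker (psiR τ x)) (ker (psiR τ y))
    rw [hsuptop, finrank_top, Module.finrank_fin_fun, ← hE] at this
    omega
  have hle : finrank K ↑(U ⊔ Submodule.span K {s}) ≤ finrank K ↑E :=
    Submodule.finrank_mono hsupE
  omega

lemma exists_third_aniso (hτne : (⇑τ : K → K) ≠ id) (hτ2 : ∀ x, τ (τ x) = x)
    (hn : 3 ≤ n) {w c : Fin n → K} (hw : Psi (⇑τ) w w ≠ 0) (hc : Psi (⇑τ) c c ≠ 0)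
    (hcw : Psi (⇑τ) c w = 0) :
    ∃ b, Psi (⇑τ) b b ≠ 0 ∧ Psi (⇑τ) b w = 0 ∧ Psi (⇑τ) b c = 0 := by
  classical
  by_contra hcon
  push_neg at hcon
  have hw0 : w ≠ 0 := by rintro rfl; exact hw (Psi_zero_left τ 0)
  have hc0 : c ≠ 0 := by rintro rfl; exact hc (Psi_zero_left τ 0)
  set T := ker (psiR τ w) ⊓ ker (psiR τ c) with hT
  have hiso : ∀ z ∈ T, Psi (⇑τ) z z = 0 := by
    intro z hz
    rw [hT, Submodule.mem_inf, mem_ker_psiR, mem_ker_psiR] at hz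
    by_contra hzz
    exact hcon z hzz hz.1 hz.2
  have htot := psi_eq_zero_of_isotropic τ hτne hτ2 hiso
  -- dim T ≥ n - 2 ≥ 1
  have hkw := finrank_ker_psiR τ hτ2 hw0
  have hkc := finrank_ker_psiR τ hτ2 hc0
  have hTle : n ≤ finrank K ↑T + 2 := by
    have h1 := Submodule.finrank_sup_add_finrank_inf_eq (ker (psiR τ w)) (ker (psiR τ c))
    have h2 : finrank K ↑(ker (psiR τ w) ⊔ ker (psiR τ c)) ≤ n := by
      have := Submodule.finrank_le (ker (psiR τ w) ⊔ ker (psiR τ c))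
      rwa [Module.finrank_fin_fun] at this
    rw [← hT] at h1
    omega
  obtain ⟨t, htT, ht0⟩ : ∃ t ∈ T, t ≠ 0 := by
    apply Submodule.exists_mem_ne_zero_of_ne_bot
    intro hbot
    rw [hbot] at hTle
    simp [finrank_bot] at hTle
    omega
  -- A = span w ⊔ span c has dimension 2
  have hwc : Submodule.span K {w} ⊓ Submodule.span K {c} = ⊥ := by
    rw [eq_bot_iff]
    rintro z ⟨hzw, hzc⟩
    obtain ⟨α, hα⟩ := Submodule.mem_span_singleton.mp hzw
    obtain ⟨β, rfl⟩ := Submodule.mem_span_singleton.mp hzc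
    have h1 : Psi (⇑τ) c (β • c) = τ β * Psi (⇑τ) c c := Psi_smul_right τ β c c
    rw [← hα, Psi_smul_right] at h1
    rw [hcw, mul_zero] at h1
    rcases mul_eq_zero.mp h1.symm with h | h
    · have : β = 0 := by
        have := congrArg τ h
        rwa [hτ2, map_zero] at this
      simp [this]
    · exact absurd h hc
  set A := Submodule.span K {w} ⊔ Submodule.span K {c} with hA
  have hfA : finrank K ↑A = 2 := by
    rw [hA, finrank_sup_of_inf_eq_bot hwc, finrank_span_singleton hw0,
      finrank_span_singleton hc0]
  have hTA : T ⊓ A = ⊥ := by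
    rw [eq_bot_iff]
    intro z hz
    rw [Submodule.mem_inf] at hz
    obtain ⟨hzT, hzA⟩ := hz
    rw [hT, Submodule.mem_inf] at hzT
    obtain ⟨z1, hz1, z2, hz2, rfl⟩ := Submodule.mem_sup.mp hzA
    obtain ⟨α, rfl⟩ := Submodule.mem_span_singleton.mp hz1
    obtain ⟨β, rfl⟩ := Submodule.mem_span_singleton.mp hz2
    obtain ⟨hzw', hzc'⟩ := hzT
    rw [mem_ker_psiR, Psi_add_left, Psi_smul_left, Psi_smul_left, hcw] at hzw'
    have hτcw : Psi (⇑τ) w c = 0 := by rw [Psi_comm τ hτ2, hcw, map_zero]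
    rw [mem_ker_psiR, Psi_add_left, Psi_smul_left, Psi_smul_left, hτcw] at hzc'
    have hα : α = 0 := by
      rcases mul_eq_zero.mp (by linear_combination hzw' : α * Psi (⇑τ) w w = 0) with h | h
      · exact h
      · exact absurd h hw
    have hβ : β = 0 := by
      rcases mul_eq_zero.mp (by linear_combination hzc' : β * Psi (⇑τ) c c = 0) with h | h
      · exact h
      · exact absurd h hc
    simp [hα, hβ]
  have hsum : finrank K ↑(T ⊔ A) = finrank K ↑T + 2 := by
    rw [finrank_sup_of_inf_eq_bot hTA, hfA]
  have htop : T ⊔ A = ⊤ := by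
    apply Submodule.eq_top_of_finrank_eq
    have hle : finrank K ↑(T ⊔ A) ≤ n := by
      have := Submodule.finrank_le (T ⊔ A)
      rwa [Module.finrank_fin_fun] at this
    rw [Module.finrank_fin_fun]
    omega
  -- every v pairs to zero with t
  apply ht0
  apply eq_zero_of_forall_psi_left τ hτ2
  intro v
  have hv : v ∈ T ⊔ A := htop ▸ Submodule.mem_top
  obtain ⟨z, hz, a, ha, rfl⟩ := Submodule.mem_sup.mp hv
  obtain ⟨a1, ha1, a2, ha2, rfl⟩ := Submodule.mem_sup.mp ha
  obtain ⟨α, rfl⟩ := Submodule.mem_span_singleton.mp ha1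
  obtain ⟨β, rfl⟩ := Submodule.mem_span_singleton.mp ha2
  have h1 : Psi (⇑τ) z t = 0 := htot z hz t htT
  have htT' := htT
  rw [hT, Submodule.mem_inf, mem_ker_psiR, mem_ker_psiR] at htT'
  have h2 : Psi (⇑τ) w t = 0 := by
    rw [Psi_comm τ hτ2, htT'.1, map_zero]
  have h3 : Psi (⇑τ) c t = 0 := by
    rw [Psi_comm τ hτ2, htT'.2, map_zero]
  rw [Psi_add_left, Psi_add_left, Psi_smul_left, Psi_smul_left, h1, h2, h3]
  ring

end Helpers


section Vertices

open Module Submodule LinearMap SimpleGraph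

variable (τ : K →+* K) {n : ℕ}

lemma exists_span_vertex {S : Submodule K (Fin n → K)} (h : IsVertex (⇑τ) S) :
    ∃ s, s ≠ 0 ∧ Psi (⇑τ) s s ≠ 0 ∧ S = Submodule.span K {s} := by
  obtain ⟨s, hsS, hs0⟩ : ∃ s ∈ S, s ≠ 0 := by
    apply Submodule.exists_mem_ne_zero_of_ne_bot
    intro hbot
    have h1 := h.1
    rw [hbot] at h1
    simp [finrank_bot] at h1
  have hspan : S = Submodule.span K {s} := by
    symm
    apply Submodule.eq_of_le_of_finrank_le ((Submodule.span_singleton_le_iff_mem s S).mpr hsS)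
    rw [finrank_span_singleton hs0, h.1]
  refine ⟨s, hs0, ?_, hspan⟩
  intro hss
  apply hs0
  have hperp : s ∈ perp (⇑τ) S := by
    intro x hx
    rw [hspan] at hx
    obtain ⟨c, rfl⟩ := Submodule.mem_span_singleton.mp hx
    rw [Psi_smul_right, hss, mul_zero]
  have : s ∈ S ⊓ perp (⇑τ) S := ⟨hsS, hperp⟩
  rw [h.2] at this
  exact this

lemma isVertex_span {a : Fin n → K} (ha : Psi (⇑τ) a a ≠ 0) :
    IsVertex (⇑τ) (Submodule.span K {a}) := by
  have ha0 : a ≠ 0 := by rintro rfl; exact ha (Psi_zero_left τ 0)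
  refine ⟨finrank_span_singleton ha0, ?_⟩
  rw [Nondeg, eq_bot_iff]
  rintro z ⟨hz1, hz2⟩
  obtain ⟨c, rfl⟩ := Submodule.mem_span_singleton.mp hz1
  have := hz2 a (Submodule.mem_span_singleton_self a)
  rw [Psi_smul_left] at this
  rcases mul_eq_zero.mp this with h | h
  · simp [h]
  · exact absurd h ha

lemma adj_of_spans (hτ2 : ∀ x, τ (τ x) = x)
    (X Y : {S : Submodule K (Fin n → K) // IsVertex (⇑τ) S}) {x y : Fin n → K}
    (hX : X.1 = Submodule.span K {x}) (hY : Y.1 = Submodule.span K {y})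
    (hx : Psi (⇑τ) x x ≠ 0) (hy : Psi (⇑τ) y y ≠ 0) (hxy : Psi (⇑τ) x y = 0) :
    (FrameGraph τ hτ2 n).Adj X Y := by
  refine And.intro ?_ ?_
  · intro hXY
    have hspan : Submodule.span K {x} = Submodule.span K {y} := by
      rw [← hX, ← hY, hXY]
    have : y ∈ Submodule.span K {x} := by
      rw [hspan]; exact Submodule.mem_span_singleton_self y
    obtain ⟨c, rfl⟩ := Submodule.mem_span_singleton.mp this
    rw [Psi_smul_right] at hxy
    rcases mul_eq_zero.mp hxy with h | h
    · have : c = 0 := by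
        have := congrArg τ h; rwa [hτ2, map_zero] at this
      rw [this, zero_smul] at hy
      exact hy (Psi_zero_left τ 0)
    · exact hx h
  · intro u hu v hv
    rw [hX] at hu; rw [hY] at hv
    obtain ⟨σ, rfl⟩ := Submodule.mem_span_singleton.mp hu
    obtain ⟨ω, rfl⟩ := Submodule.mem_span_singleton.mp hv
    rw [Psi_smul_left, Psi_smul_right, hxy]
    ring

lemma exists_walk_of_pair (hτ2 : ∀ x, τ (τ x) = x)
    (S W : {S : Submodule K (Fin n → K) // IsVertex (⇑τ) S}) {s w a b : Fin n → K}
    (hS : S.1 = Submodule.span K {s}) (hW : W.1 = Submodule.span K {w})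
    (hs : Psi (⇑τ) s s ≠ 0) (hw : Psi (⇑τ) w w ≠ 0)
    (ha : Psi (⇑τ) a a ≠ 0) (hb : Psi (⇑τ) b b ≠ 0)
    (has : Psi (⇑τ) a s = 0) (hab : Psi (⇑τ) a b = 0) (hbw : Psi (⇑τ) b w = 0) :
    ∃ p : (FrameGraph τ hτ2 n).Walk S W, p.length = 3 := by
  set A : {S : Submodule K (Fin n → K) // IsVertex (⇑τ) S} :=
    ⟨Submodule.span K {a}, isVertex_span τ ha⟩ with hA
  set B : {S : Submodule K (Fin n → K) // IsVertex (⇑τ) S} :=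
    ⟨Submodule.span K {b}, isVertex_span τ hb⟩ with hB
  have hsa : Psi (⇑τ) s a = 0 := by rw [Psi_comm τ hτ2, has, map_zero]
  have adj1 : (FrameGraph τ hτ2 n).Adj S A := adj_of_spans τ hτ2 S A hS rfl hs ha hsa
  have adj2 : (FrameGraph τ hτ2 n).Adj A B := adj_of_spans τ hτ2 A B rfl rfl ha hb hab
  have adj3 : (FrameGraph τ hτ2 n).Adj B W := adj_of_spans τ hτ2 B W rfl hW hb hw hbw
  exact ⟨Walk.cons adj1 (Walk.cons adj2 (Walk.cons adj3 Walk.nil)), by simp⟩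

lemma pair_of_walk (hτ2 : ∀ x, τ (τ x) = x)
    (S W : {S : Submodule K (Fin n → K) // IsVertex (⇑τ) S}) {s w : Fin n → K}
    (hS : S.1 = Submodule.span K {s}) (hW : W.1 = Submodule.span K {w})
    (h : ∃ p : (FrameGraph τ hτ2 n).Walk S W, p.length = 3) :
    ∃ a b : Fin n → K, Psi (⇑τ) a a ≠ 0 ∧ Psi (⇑τ) b b ≠ 0 ∧
      Psi (⇑τ) a s = 0 ∧ Psi (⇑τ) a b = 0 ∧ Psi (⇑τ) b w = 0 := by
  obtain ⟨p, hp⟩ := h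
  cases p with
  | nil => simp at hp
  | cons h1 q =>
    cases q with
    | nil => simp at hp
    | cons h2 r =>
      cases r with
      | nil => simp at hp
      | cons h3 r' =>
        cases r' with
        | cons h4 r'' => simp [SimpleGraph.Walk.length_cons] at hp
        | nil =>
          rename_i A B
          obtain ⟨a, ha0, haa, hA⟩ := exists_span_vertex τ A.2
          obtain ⟨b, hb0, hbb, hB⟩ := exists_span_vertex τ B.2
          refine ⟨a, b, haa, hbb, ?_, ?_, ?_⟩
          · have := (And.right h1) s (by rw [hS]; exact Submodule.mem_span_singleton_self s)
              a (by rw [hA]; exact Submodule.mem_span_singleton_self a)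
            rw [Psi_comm τ hτ2, this, map_zero]
          · exact (And.right h2) a (by rw [hA]; exact Submodule.mem_span_singleton_self a)
              b (by rw [hB]; exact Submodule.mem_span_singleton_self b)
          · exact (And.right h3) b (by rw [hB]; exact Submodule.mem_span_singleton_self b)
              w (by rw [hW]; exact Submodule.mem_span_singleton_self w)

lemma nondeg_span_sup (hτ2 : ∀ x, τ (τ x) = x) {s w : Fin n → K}
    (hs : Psi (⇑τ) s s ≠ 0) (hw : Psi (⇑τ) w w ≠ 0) (hsw : Psi (⇑τ) s w = 0) :
    Nondeg (⇑τ) (Submodule.span K {s} ⊔ Submodule.span K {w}) := by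
  rw [Nondeg, eq_bot_iff]
  rintro z ⟨hz1, hz2⟩
  obtain ⟨z1, hz1', z2, hz2', rfl⟩ := Submodule.mem_sup.mp hz1
  obtain ⟨σ, rfl⟩ := Submodule.mem_span_singleton.mp hz1'
  obtain ⟨ω, rfl⟩ := Submodule.mem_span_singleton.mp hz2'
  have hws : Psi (⇑τ) w s = 0 := by rw [Psi_comm τ hτ2, hsw, map_zero]
  have hzs := hz2 s (Submodule.mem_sup_left (Submodule.mem_span_singleton_self s))
  have hzw := hz2 w (Submodule.mem_sup_right (Submodule.mem_span_singleton_self w))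
  rw [Psi_add_left, Psi_smul_left, Psi_smul_left, hws] at hzs
  have hσ : σ = 0 := by
    rcases mul_eq_zero.mp (by linear_combination hzs : σ * Psi (⇑τ) s s = 0) with h | h
    · exact h
    · exact absurd h hs
  rw [Psi_add_left, Psi_smul_left, Psi_smul_left, hsw] at hzw
  have hω : ω = 0 := by
    rcases mul_eq_zero.mp (by linear_combination hzw : ω * Psi (⇑τ) w w = 0) with h | h
    · exact h
    · exact absurd h hw
  simp [hσ, hω]

end Vertices


section CardFour

variable (τ : K →+* K)

lemma char_two_of_card4 (hc : Nat.card K = 4) : (2 : K) = 0 := by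
  have hfin : Finite K := Nat.finite_of_card_ne_zero (by omega)
  cases nonempty_fintype K
  have hcard : Fintype.card K = 4 := by rw [← Nat.card_eq_fintype_card, hc]
  obtain ⟨p, hp⟩ := CharP.exists K
  haveI := hp
  have hprime : p.Prime := CharP.char_is_prime K p
  haveI : Fact p.Prime := ⟨hprime⟩
  obtain ⟨m, hm⟩ := FiniteField.card K p
  rw [hcard] at hm
  have hpd : p ∣ 2 := by
    apply hprime.dvd_of_dvd_pow (n := 2)
    rw [(by norm_num : (2:ℕ)^2 = 4), hm.2]
    exact dvd_pow_self p (by positivity)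
  have hp2 : p = 2 := (Nat.prime_dvd_prime_iff_eq hprime Nat.prime_two).mp hpd
  rw [hp2] at hp
  exact (@CharP.cast_eq_zero_iff K _ 2 hp 2).mpr dvd_rfl

lemma fixed_mem_of_card4 (hτne : (⇑τ : K → K) ≠ id) (hc : Nat.card K = 4) :
    ∀ x : K, τ x = x → x = 0 ∨ x = 1 := by
  intro x hx
  by_contra hcon
  push_neg at hcon
  obtain ⟨hx0, hx1⟩ := hcon
  have h2 : (2 : K) = 0 := char_two_of_card4 hc
  have hfin : Finite K := Nat.finite_of_card_ne_zero (by omega)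
  cases nonempty_fintype K
  have hcard : Fintype.card K = 4 := by rw [← Nat.card_eq_fintype_card, hc]
  classical
  -- the four elements 0, 1, x, 1 + x are distinct
  have d1 : (0 : K) ≠ 1 := zero_ne_one
  have d2 : (0 : K) ≠ x := Ne.symm hx0
  have d3 : (0 : K) ≠ 1 + x := by
    intro h
    apply hx1
    have : x = -1 := by linear_combination -h
    rw [this]
    linear_combination -h2
  have d4 : (1 : K) ≠ x := Ne.symm hx1
  have d5 : (1 : K) ≠ 1 + x := by
    intro h; exact hx0 (by linear_combination -h)
  have d6 : x ≠ 1 + x := by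
    intro h
    exact (one_ne_zero : (1:K) ≠ 0) (by linear_combination -h)
  set s : Finset K := {0, 1, x, 1 + x} with hs
  have hcards : s.card = 4 := by
    rw [hs]
    rw [Finset.card_insert_of_notMem (by simp [d1, d2, d3]),
      Finset.card_insert_of_notMem (by simp [d4, d5]),
      Finset.card_insert_of_notMem (by simp [d6])]
    simp
  have huniv : s = Finset.univ := Finset.eq_univ_of_card s (by rw [hcards, hcard])
  apply hτne
  funext y
  have hy : y ∈ s := by rw [huniv]; exact Finset.mem_univ y
  rw [hs] at hy
  simp only [Finset.mem_insert, Finset.mem_singleton] at hy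
  show τ y = y
  rcases hy with rfl | rfl | rfl | rfl
  · exact map_zero τ
  · exact map_one τ
  · exact hx
  · rw [map_add, map_one, hx]

lemma exists_fixed_ne (hτne : (⇑τ : K → K) ≠ id) (hτ2 : ∀ x, τ (τ x) = x)
    (hcard : Nat.card K ≠ 4) (t₁ t₂ : K) : ∃ t, τ t = t ∧ t ≠ t₁ ∧ t ≠ t₂ := by
  classical
  -- first, find a fixed point which is neither 0 nor 1
  obtain ⟨c, hcfix, hc0, hc1⟩ : ∃ c : K, τ c = c ∧ c ≠ 0 ∧ c ≠ 1 := by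
    by_contra hcon
    push_neg at hcon
    have hK : ∀ c : K, τ c = c → c = 0 ∨ c = 1 := by
      intro c hc
      by_contra hc'
      push_neg at hc'
      exact hc'.2 (hcon c hc hc'.1)
    apply hcard
    obtain ⟨x₀, hx₀⟩ := Function.ne_iff.mp hτne
    have hx₀ : τ x₀ ≠ x₀ := hx₀
    have h2 : (2 : K) = 0 := by
      rcases hK 2 (by rw [map_ofNat]) with h | h
      · exact h
      · exfalso
        exact (one_ne_zero : (1:K) ≠ 0) (by linear_combination h)
    have hT : x₀ + τ x₀ = 1 := by
      rcases hK (x₀ + τ x₀) (by rw [map_add, hτ2]; ring) with h | h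
      · exfalso
        apply hx₀
        linear_combination h - x₀ * h2
      · exact h
    have hN : x₀ * τ x₀ = 1 := by
      rcases hK (x₀ * τ x₀) (by rw [map_mul, hτ2]; ring) with h | h
      · exfalso
        rcases mul_eq_zero.mp h with h' | h'
        · apply hx₀; rw [h', map_zero]
        · apply hx₀
          have hx00 : x₀ = 0 := by rw [← hτ2 x₀, h', map_zero]
          rw [hx00, map_zero]
      · exact h
    -- every element is one of 0, 1, x₀, 1 + x₀
    have hall : ∀ y : K, y = 0 ∨ y = 1 ∨ y = x₀ ∨ y = 1 + x₀ := by
      intro y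
      rcases hK (y + τ y) (by rw [map_add, hτ2]; ring) with hTy | hTy
      · have hfix : τ y = y := by linear_combination hTy - y * h2
        rcases hK y hfix with h | h
        · exact Or.inl h
        · exact Or.inr (Or.inl h)
      · rcases hK (y * τ y) (by rw [map_mul, hτ2]; ring) with hNy | hNy
        · exfalso
          rcases mul_eq_zero.mp hNy with h' | h'
          · simp [h'] at hTy
          · have hy0 : y = 0 := by rw [← hτ2 y, h', map_zero]
            simp [hy0] at hTy
        · -- y² + y = 1 and x₀² + x₀ = 1, char 2 : (y - x₀)(y - x₀ - 1) = 0
          have hτy : τ y = 1 - y := by linear_combination hTy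
          rw [hτy] at hNy
          have hτx : τ x₀ = 1 - x₀ := by linear_combination hT
          rw [hτx] at hN
          have key : (y - x₀) * (y - x₀ - 1) = 0 := by
            linear_combination -hNy + hN + (x₀ * x₀ - x₀ * y) * h2
          rcases mul_eq_zero.mp key with h' | h'
          · right; right; left; linear_combination h'
          · right; right; right; linear_combination h'
    -- hence K has exactly four elements
    have d1 : (0 : K) ≠ 1 := zero_ne_one
    have d2 : (0 : K) ≠ x₀ := by rintro rfl; exact hx₀ (map_zero τ)
    have d4 : (1 : K) ≠ x₀ := by rintro h; exact hx₀ (h ▸ map_one τ)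
    have d3 : (0 : K) ≠ 1 + x₀ := by
      intro h
      apply d4
      have hxm : x₀ = -1 := by linear_combination -h
      rw [hxm]
      linear_combination h2
    have d5 : (1 : K) ≠ 1 + x₀ := by
      intro h; exact d2 (by linear_combination h)
    have d6 : x₀ ≠ 1 + x₀ := by
      intro h
      exact (one_ne_zero : (1:K) ≠ 0) (by linear_combination -h)
    have hfin : Finite K := by
      apply Finite.of_surjective
        (f := fun i : Fin 4 => if i = 0 then (0 : K) else if i = 1 then 1 else if i = 2 then x₀ else 1 + x₀)
      intro y
      rcases hall y with rfl | rfl | rfl | rfl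
      · exact ⟨0, rfl⟩
      · exact ⟨1, rfl⟩
      · exact ⟨2, rfl⟩
      · exact ⟨3, rfl⟩
    cases nonempty_fintype K
    rw [Nat.card_eq_fintype_card]
    have huniv : (Finset.univ : Finset K) = {0, 1, x₀, 1 + x₀} := by
      apply Finset.eq_of_subset_of_card_le
      · intro y _
        simp only [Finset.mem_insert, Finset.mem_singleton]
        exact hall y
      · apply Finset.card_le_card
        intro y _
        exact Finset.mem_univ y
    rw [← Finset.card_univ, huniv]
    rw [Finset.card_insert_of_notMem (by simp [d1, d2, d3]),
      Finset.card_insert_of_notMem (by simp [d4, d5]),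
      Finset.card_insert_of_notMem (by simp [d6])]
    simp
  -- now pick among 0, 1, c
  rcases ne_or_eq (0 : K) t₁ with ha | ha
  · rcases ne_or_eq (0 : K) t₂ with hb | hb
    · exact ⟨0, map_zero τ, ha, hb⟩
    · rcases ne_or_eq (1 : K) t₁ with hc' | hc'
      · exact ⟨1, map_one τ, hc', by rw [← hb]; exact one_ne_zero⟩
      · exact ⟨c, hcfix, by rw [← hc']; exact hc1, by rw [← hb]; exact hc0⟩
  · rcases ne_or_eq (1 : K) t₂ with hb | hb
    · exact ⟨1, map_one τ, by rw [← ha]; exact one_ne_zero, hb⟩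
    · exact ⟨c, hcfix, by rw [← ha]; exact hc0, by rw [← hb]; exact hc1⟩

end CardFour


section Construction

open Module Submodule LinearMap

variable (τ : K →+* K) {n : ℕ}

lemma exists_trace_one (hτne : (⇑τ : K → K) ≠ id) (hτ2 : ∀ x, τ (τ x) = x) :
    ∃ ε : K, ε + τ ε = 1 := by
  obtain ⟨x₀, hx₀⟩ := Function.ne_iff.mp hτne
  have hx₀ : τ x₀ ≠ x₀ := hx₀
  have hδ : x₀ - τ x₀ ≠ 0 := sub_ne_zero.mpr (Ne.symm hx₀)
  have hδ' : τ x₀ - x₀ ≠ 0 := sub_ne_zero.mpr hx₀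
  refine ⟨x₀ * (x₀ - τ x₀)⁻¹, ?_⟩
  rw [map_mul, map_inv₀, map_sub, hτ2]
  field_simp
  ring

lemma Psi_expand (x y z t' : Fin n → K) (c e : K) :
    Psi (⇑τ) (x + c • y) (z + e • t') =
      Psi (⇑τ) x z + τ e * Psi (⇑τ) x t' + c * Psi (⇑τ) y z + c * (τ e * Psi (⇑τ) y t') := by
  rw [Psi_add_left, Psi_add_right, Psi_add_right, Psi_smul_left, Psi_smul_left,
    Psi_smul_right, Psi_smul_right]
  ring

lemma exists_pair_construction (hτne : (⇑τ : K → K) ≠ id) (hτ2 : ∀ x, τ (τ x) = x)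
    (hcard : Nat.card K ≠ 4) {s w a' b' d : Fin n → K}
    (hsA : Psi (⇑τ) a' a' ≠ 0) (ha's : Psi (⇑τ) a' s = 0)
    (hbA : Psi (⇑τ) b' b' ≠ 0) (hb'w : Psi (⇑τ) b' w = 0)
    (hdd : Psi (⇑τ) d d = 0) (hds : Psi (⇑τ) d s = 0) (hdw : Psi (⇑τ) d w = 0)
    (hu : Psi (⇑τ) d a' ≠ 0) (hv : Psi (⇑τ) d b' ≠ 0) :
    ∃ a b : Fin n → K, Psi (⇑τ) a a ≠ 0 ∧ Psi (⇑τ) b b ≠ 0 ∧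
      Psi (⇑τ) a s = 0 ∧ Psi (⇑τ) a b = 0 ∧ Psi (⇑τ) b w = 0 := by
  obtain ⟨ε, hε⟩ := exists_trace_one τ hτne hτ2
  have hτε : τ ε = 1 - ε := by linear_combination hε
  set u := Psi (⇑τ) d a' with hu_def
  set v := Psi (⇑τ) d b' with hv_def
  set c0 := Psi (⇑τ) a' b' with hc0_def
  set N' := Psi (⇑τ) a' a' with hN_def
  set M' := Psi (⇑τ) b' b' with hM_def
  have hτv : τ v ≠ 0 := fun h => hv (by rw [← hτ2 v, h, map_zero])
  have hτu : τ u ≠ 0 := fun h => hu (by rw [← hτ2 u, h, map_zero])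
  set t₂ := (N' * (v * τ v) - c0 * u * τ v - τ c0 * τ u * v) * (u * τ u)⁻¹ with ht₂_def
  obtain ⟨t, htfix, ht1, ht2⟩ := exists_fixed_ne τ hτne hτ2 hcard (-M') t₂
  set μ := ε * t * v⁻¹ with hμ_def
  set l := -(c0 + τ μ * τ u) * v⁻¹ with hl_def
  have hτμ : τ μ = (1 - ε) * t * (τ v)⁻¹ := by
    rw [hμ_def, map_mul, map_mul, map_inv₀, hτε, htfix]
  have hτl : τ l = -(τ c0 + μ * u) * (τ v)⁻¹ := by
    rw [hl_def, map_mul, map_neg, map_add, map_mul, map_inv₀, hτ2, hτ2]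
  have ha'd : Psi (⇑τ) a' d = τ u := by rw [hu_def, ← Psi_comm τ hτ2]
  have hb'd : Psi (⇑τ) b' d = τ v := by rw [hv_def, ← Psi_comm τ hτ2]
  refine ⟨a' + l • d, b' + μ • d, ?_, ?_, ?_, ?_, ?_⟩
  · -- Psi a a ≠ 0
    rw [Psi_expand, ha'd, ← hu_def, ← hN_def, hdd]
    intro h0
    apply ht2
    rw [ht₂_def, eq_mul_inv_iff_mul_eq₀ (mul_ne_zero hu hτu)]
    rw [hτl, hl_def, hτμ, hμ_def] at h0
    field_simp at h0
    have h1 : (v * τ v) * (N' * (v * τ v) - c0 * u * τ v - τ c0 * τ u * v - t * (u * τ u)) = 0 := by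
      linear_combination h0
    rcases mul_eq_zero.mp h1 with h | h
    · exact absurd h (mul_ne_zero hv hτv)
    · linear_combination -h
  · -- Psi b b ≠ 0
    rw [Psi_expand, hb'd, ← hv_def, ← hM_def, hdd]
    have : M' + τ μ * τ v + μ * v + μ * (τ μ * 0) = M' + t := by
      rw [hτμ, hμ_def]
      field_simp
      ring
    rw [this]
    intro h0
    exact ht1 (by linear_combination h0)
  · -- Psi a s = 0
    rw [Psi_add_left, Psi_smul_left, ha's, hds]
    ring
  · -- Psi a b = 0
    rw [Psi_expand, ha'd, ← hv_def, ← hc0_def, hdd]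
    rw [hl_def]
    field_simp
    ring
  · -- Psi b w = 0
    rw [Psi_add_left, Psi_smul_left, hb'w, hdw]
    ring

end Construction


section ForwardCore

open Module Submodule LinearMap

variable (τ : K →+* K) {n : ℕ}

lemma inf_span_singleton_eq_bot {V : Type*} [AddCommGroup V] [Module K V]
    (p : Submodule K V) {y : V} (h : y ∉ p) : p ⊓ Submodule.span K {y} = ⊥ := by
  rw [eq_bot_iff]
  rintro z ⟨hz1, hz2⟩
  obtain ⟨c, rfl⟩ := Submodule.mem_span_singleton.mp hz2
  rcases eq_or_ne c 0 with rfl | hc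
  · simp
  · exfalso
    apply h
    have := p.smul_mem c⁻¹ hz1
    rwa [smul_smul, inv_mul_cancel₀ hc, one_smul] at this

lemma psi_self_fixed (hτ2 : ∀ x, τ (τ x) = x) (v : Fin n → K) :
    τ (Psi (⇑τ) v v) = Psi (⇑τ) v v := (Psi_comm τ hτ2 v v).symm

lemma nondeg_of_pair_card4 (hτne : (⇑τ : K → K) ≠ id) (hτ2 : ∀ x, τ (τ x) = x)
    (hc4 : Nat.card K = 4) (hn3 : n = 3) {s w a b : Fin n → K}
    (hs : Psi (⇑τ) s s ≠ 0) (hw : Psi (⇑τ) w w ≠ 0)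
    (ha : Psi (⇑τ) a a ≠ 0) (hb : Psi (⇑τ) b b ≠ 0)
    (has : Psi (⇑τ) a s = 0) (hab : Psi (⇑τ) a b = 0) (hbw : Psi (⇑τ) b w = 0) :
    Nondeg (⇑τ) (Submodule.span K {s} ⊔ Submodule.span K {w}) := by
  subst hn3
  have hfix := fixed_mem_of_card4 τ hτne hc4
  have h2 : (2 : K) = 0 := char_two_of_card4 hc4
  have hs0 : s ≠ 0 := by rintro rfl; exact hs (Psi_zero_left τ 0)
  have hw0 : w ≠ 0 := by rintro rfl; exact hw (Psi_zero_left τ 0)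
  have ha0 : a ≠ 0 := by rintro rfl; exact ha (Psi_zero_left τ 0)
  have hb0 : b ≠ 0 := by rintro rfl; exact hb (Psi_zero_left τ 0)
  have hba : Psi (⇑τ) b a = 0 := by rw [Psi_comm τ hτ2, hab, map_zero]
  -- find e spanning the common kernel
  obtain ⟨e, heE, he0⟩ : ∃ e ∈ ker (psiR τ a) ⊓ ker (psiR τ b), e ≠ 0 := by
    apply Submodule.exists_mem_ne_zero_of_ne_bot
    intro hbot
    have h1 := Submodule.finrank_sup_add_finrank_inf_eq (ker (psiR τ a)) (ker (psiR τ b))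
    rw [hbot] at h1
    have hka := finrank_ker_psiR τ hτ2 ha0
    have hkb := finrank_ker_psiR τ hτ2 hb0
    have h3 : finrank K ↑(ker (psiR τ a) ⊔ ker (psiR τ b)) ≤ 3 := by
      have := Submodule.finrank_le (ker (psiR τ a) ⊔ ker (psiR τ b))
      rwa [Module.finrank_fin_fun] at this
    rw [finrank_bot] at h1
    omega
  rw [Submodule.mem_inf, mem_ker_psiR, mem_ker_psiR] at heE
  obtain ⟨hea, heb⟩ := heE
  have hae : Psi (⇑τ) a e = 0 := by rw [Psi_comm τ hτ2, hea, map_zero]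
  have hbe : Psi (⇑τ) b e = 0 := by rw [Psi_comm τ hτ2, heb, map_zero]
  -- e is not in span a ⊔ span b
  have heab : e ∉ Submodule.span K {a} ⊔ Submodule.span K {b} := by
    intro hmem
    obtain ⟨z1, hz1, z2, hz2, hzeq⟩ := Submodule.mem_sup.mp hmem
    obtain ⟨α, rfl⟩ := Submodule.mem_span_singleton.mp hz1
    obtain ⟨β, rfl⟩ := Submodule.mem_span_singleton.mp hz2
    have h1 : Psi (⇑τ) e a = 0 := hea
    have h2' : Psi (⇑τ) e b = 0 := heb
    rw [← hzeq, Psi_add_left, Psi_smul_left, Psi_smul_left, hba] at h1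
    have hα : α = 0 := by
      rcases mul_eq_zero.mp (by linear_combination h1 : α * Psi (⇑τ) a a = 0) with h | h
      · exact h
      · exact absurd h ha
    rw [← hzeq, Psi_add_left, Psi_smul_left, Psi_smul_left, hab] at h2'
    have hβ : β = 0 := by
      rcases mul_eq_zero.mp (by linear_combination h2' : β * Psi (⇑τ) b b = 0) with h | h
      · exact h
      · exact absurd h hb
    rw [hα, hβ] at hzeq
    simp at hzeq
    exact he0 hzeq.symm
  -- a, b independent
  have hab_inf : Submodule.span K {a} ⊓ Submodule.span K {b} = ⊥ := by
    apply inf_span_singleton_eq_bot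
    intro hmem
    obtain ⟨c, rfl⟩ := Submodule.mem_span_singleton.mp hmem
    rw [Psi_smul_left] at hba
    rcases mul_eq_zero.mp hba with h | h
    · rw [h, zero_smul] at hb; exact hb (Psi_zero_left τ 0)
    · exact ha h
  have hfab : finrank K ↑(Submodule.span K {a} ⊔ Submodule.span K {b}) = 2 := by
    rw [finrank_sup_of_inf_eq_bot hab_inf, finrank_span_singleton ha0,
      finrank_span_singleton hb0]
  -- e is anisotropic
  have hee : Psi (⇑τ) e e ≠ 0 := by
    intro hee0
    apply he0
    apply eq_zero_of_forall_psi_right τ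
    intro v
    have htop : Submodule.span K {a} ⊔ Submodule.span K {b} ⊔ Submodule.span K {e} = ⊤ := by
      apply Submodule.eq_top_of_finrank_eq
      rw [Module.finrank_fin_fun,
        finrank_sup_of_inf_eq_bot (inf_span_singleton_eq_bot _ heab), hfab,
        finrank_span_singleton he0]
    have hv : v ∈ Submodule.span K {a} ⊔ Submodule.span K {b} ⊔ Submodule.span K {e} :=
      htop ▸ Submodule.mem_top
    obtain ⟨z, hz, z3, hz3, rfl⟩ := Submodule.mem_sup.mp hv
    obtain ⟨z1, hz1, z2, hz2, rfl⟩ := Submodule.mem_sup.mp hz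
    obtain ⟨α, rfl⟩ := Submodule.mem_span_singleton.mp hz1
    obtain ⟨β, rfl⟩ := Submodule.mem_span_singleton.mp hz2
    obtain ⟨γ, rfl⟩ := Submodule.mem_span_singleton.mp hz3
    rw [Psi_add_right, Psi_add_right, Psi_smul_right, Psi_smul_right, Psi_smul_right,
      hea, heb, hee0]
    ring
  -- s lies in span b ⊔ span e
  have hkera : Submodule.span K {b} ⊔ Submodule.span K {e} = ker (psiR τ a) := by
    apply Submodule.eq_of_le_of_finrank_le
    · apply sup_le
      · rw [Submodule.span_singleton_le_iff_mem, mem_ker_psiR]; exact hba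
      · rw [Submodule.span_singleton_le_iff_mem, mem_ker_psiR]; exact hea
    · have hbe_inf : Submodule.span K {b} ⊓ Submodule.span K {e} = ⊥ := by
        apply inf_span_singleton_eq_bot
        intro hmem
        obtain ⟨c, rfl⟩ := Submodule.mem_span_singleton.mp hmem
        rw [Psi_smul_left] at heb
        rcases mul_eq_zero.mp heb with h | h
        · rw [h, zero_smul] at hee; exact hee (Psi_zero_left τ 0)
        · exact hb h
      rw [finrank_sup_of_inf_eq_bot hbe_inf, finrank_span_singleton hb0,
        finrank_span_singleton he0]
      have := finrank_ker_psiR τ hτ2 ha0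
      omega
  -- the decomposition dichotomy
  have dichot : ∀ x : Fin 3 → K, Psi (⇑τ) x x ≠ 0 →
      ∀ β γ : K, ∀ y z : Fin 3 → K, x = β • y + γ • z →
      Psi (⇑τ) y y ≠ 0 → Psi (⇑τ) z z ≠ 0 → Psi (⇑τ) z y = 0 → Psi (⇑τ) y z = 0 →
      β = 0 ∨ γ = 0 := by
    intro x hx β γ y z hdec hy hz hzy hyz
    have hxx : Psi (⇑τ) x x = β * τ β * Psi (⇑τ) y y + γ * τ γ * Psi (⇑τ) z z := by
      rw [hdec, Psi_expand, Psi_smul_left, Psi_smul_right, Psi_smul_left, Psi_smul_right,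
        hzy, hyz]
      ring
    set x1 := β * τ β * Psi (⇑τ) y y with hx1
    set x2 := γ * τ γ * Psi (⇑τ) z z with hx2
    have hx1fix : τ x1 = x1 := by
      rw [hx1, map_mul, map_mul, hτ2, psi_self_fixed τ hτ2]
      ring
    have hx2fix : τ x2 = x2 := by
      rw [hx2, map_mul, map_mul, hτ2, psi_self_fixed τ hτ2]
      ring
    rcases hfix x1 hx1fix with h1 | h1
    · left
      rcases mul_eq_zero.mp h1 with h' | h'
      · rcases mul_eq_zero.mp h' with h'' | h''
        · exact h''
        · rw [← hτ2 β, h'', map_zero]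
      · exact absurd h' hy
    · rcases hfix x2 hx2fix with h2' | h2'
      · right
        rcases mul_eq_zero.mp h2' with h' | h'
        · rcases mul_eq_zero.mp h' with h'' | h''
          · exact h''
          · rw [← hτ2 γ, h'', map_zero]
        · exact absurd h' hz
      · exfalso
        apply hx
        rw [hxx, h1, h2']
        linear_combination h2
  -- decompose s
  have hsa : Psi (⇑τ) s a = 0 := by rw [Psi_comm τ hτ2, has, map_zero]
  have hsmem : s ∈ Submodule.span K {b} ⊔ Submodule.span K {e} := by
    rw [hkera, mem_ker_psiR]; exact hsa
  obtain ⟨z1, hz1, z2, hz2, hseq⟩ := Submodule.mem_sup.mp hsmem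
  obtain ⟨β, rfl⟩ := Submodule.mem_span_singleton.mp hz1
  obtain ⟨γ, rfl⟩ := Submodule.mem_span_singleton.mp hz2
  have heb' : Psi (⇑τ) e b = 0 := heb
  rcases dichot s hs β γ b e hseq.symm hb hee heb' hbe with hβ | hγ
  · -- s = γ • e
    rw [hβ, zero_smul, zero_add] at hseq
    have hγ0 : γ ≠ 0 := by rintro rfl; rw [zero_smul] at hseq; exact hs0 hseq.symm
    have hspan_se : Submodule.span K {s} = Submodule.span K {e} := by
      rw [← hseq]; exact Submodule.span_singleton_smul_eq (IsUnit.mk0 γ hγ0) e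
    -- decompose w
    have hwb : Psi (⇑τ) w b = 0 := by rw [Psi_comm τ hτ2, hbw, map_zero]
    have hkerb : Submodule.span K {a} ⊔ Submodule.span K {e} = ker (psiR τ b) := by
      apply Submodule.eq_of_le_of_finrank_le
      · apply sup_le
        · rw [Submodule.span_singleton_le_iff_mem, mem_ker_psiR]; exact hab
        · rw [Submodule.span_singleton_le_iff_mem, mem_ker_psiR]; exact heb
      · have hae_inf : Submodule.span K {a} ⊓ Submodule.span K {e} = ⊥ := by
          apply inf_span_singleton_eq_bot
          intro hmem
          obtain ⟨c, rfl⟩ := Submodule.mem_span_singleton.mp hmem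
          rw [Psi_smul_left] at hea
          rcases mul_eq_zero.mp hea with h | h
          · rw [h, zero_smul] at hee; exact hee (Psi_zero_left τ 0)
          · exact ha h
        rw [finrank_sup_of_inf_eq_bot hae_inf, finrank_span_singleton ha0,
          finrank_span_singleton he0]
        have := finrank_ker_psiR τ hτ2 hb0
        omega
    have hwmem : w ∈ Submodule.span K {a} ⊔ Submodule.span K {e} := by
      rw [hkerb, mem_ker_psiR]; exact hwb
    obtain ⟨y1, hy1, y2, hy2, hweq⟩ := Submodule.mem_sup.mp hwmem
    obtain ⟨α, rfl⟩ := Submodule.mem_span_singleton.mp hy1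
    obtain ⟨δ, rfl⟩ := Submodule.mem_span_singleton.mp hy2
    rcases dichot w hw α δ a e hweq.symm ha hee hea hae with hα | hδ
    · -- w = δ • e : S = W = span e
      rw [hα, zero_smul, zero_add] at hweq
      have hδ0 : δ ≠ 0 := by rintro rfl; rw [zero_smul] at hweq; exact hw0 hweq.symm
      have hspan_we : Submodule.span K {w} = Submodule.span K {e} := by
        rw [← hweq]; exact Submodule.span_singleton_smul_eq (IsUnit.mk0 δ hδ0) e
      rw [hspan_se, hspan_we, sup_idem]
      exact (isVertex_span τ hee).2
    · -- w = α • a : s ⊥ w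
      rw [hδ, zero_smul, add_zero] at hweq
      apply nondeg_span_sup τ hτ2 hs hw
      rw [← hseq, ← hweq, Psi_smul_left, Psi_smul_right, hea]
      ring
  · -- s = β • b : s ⊥ w
    rw [hγ, zero_smul, add_zero] at hseq
    apply nondeg_span_sup τ hτ2 hs hw
    rw [← hseq, Psi_smul_left, hbw]
    ring

end ForwardCore

/-- For `n ≥ 3`, under condition (ON), for any vertices `S, W` of `G(V)`,
there is a walk of length `3` from `S` to `W` iff `K` does not have exactly `4` elements,
or `n ≠ 3`, or `S + W` is non-degenerate. -/
theorem statement4 (τ : K →+* K) (hτne : (⇑τ : K → K) ≠ id) (hτ2 : ∀ x, τ (τ x) = x)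
    (n : ℕ) (hn : 3 ≤ n)
    (hON : ∀ v : Fin n → K, ∃ x : K, Psi (⇑τ) v v = x * τ x)
    (S W : {S : Submodule K (Fin n → K) // IsVertex (⇑τ) S}) :
    (∃ p : (FrameGraph τ hτ2 n).Walk S W, p.length = 3) ↔
      (Nat.card K ≠ 4 ∨ n ≠ 3 ∨ Nondeg (⇑τ) (S.1 ⊔ W.1)) := by
  classical
  open Module Submodule LinearMap in
  obtain ⟨s, hs0, hss, hSs⟩ := exists_span_vertex τ S.2
  obtain ⟨w, hw0, hww, hWw⟩ := exists_span_vertex τ W.2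
  constructor
  · intro hwalk
    by_cases hc4 : Nat.card K = 4
    swap
    · exact Or.inl hc4
    by_cases hn3 : n = 3
    swap
    · exact Or.inr (Or.inl hn3)
    right; right
    obtain ⟨a, b, haa, hbb, has, hab, hbw⟩ := pair_of_walk τ hτ2 S W hSs hWw hwalk
    rw [hSs, hWw]
    exact nondeg_of_pair_card4 τ hτne hτ2 hc4 hn3 hss hww haa hbb has hab hbw
  · intro hrhs
    suffices hex : ∃ a b : Fin n → K, Psi (⇑τ) a a ≠ 0 ∧ Psi (⇑τ) b b ≠ 0 ∧
        Psi (⇑τ) a s = 0 ∧ Psi (⇑τ) a b = 0 ∧ Psi (⇑τ) b w = 0 by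
      obtain ⟨a, b, h1, h2, h3, h4, h5⟩ := hex
      exact exists_walk_of_pair τ hτ2 S W hSs hWw hss hww h1 h2 h3 h4 h5
    by_cases hD : ∃ c : Fin n → K, Psi (⇑τ) c s = 0 ∧ Psi (⇑τ) c w = 0 ∧ Psi (⇑τ) c c ≠ 0
    · -- there is an anisotropic common-orthogonal vector
      obtain ⟨c, hcs, hcw2, hcc⟩ := hD
      obtain ⟨b, hbb, hbw, hbc⟩ := exists_third_aniso τ hτne hτ2 hn hww hcc hcw2
      refine ⟨c, b, hcc, hbb, hcs, ?_, hbw⟩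
      rw [Psi_comm τ hτ2, hbc, map_zero]
    · -- the common orthogonal complement is totally isotropic
      push_neg at hD
      have hiso : ∀ z ∈ LinearMap.ker (psiR τ s) ⊓ LinearMap.ker (psiR τ w),
          Psi (⇑τ) z z = 0 := by
        intro z hz
        rw [Submodule.mem_inf, mem_ker_psiR, mem_ker_psiR] at hz
        by_contra hzz
        exact hzz (hD z hz.1 hz.2)
      have hDs : ∀ x ∈ LinearMap.ker (psiR τ s) ⊓ LinearMap.ker (psiR τ w),
          Psi (⇑τ) x s = 0 := by
        intro x hx
        rw [Submodule.mem_inf, mem_ker_psiR, mem_ker_psiR] at hx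
        exact hx.1
      have hks := finrank_ker_psiR τ hτ2 hs0
      have hkw := finrank_ker_psiR τ hτ2 hw0
      have hdim_ge : n ≤
          finrank K ↑(LinearMap.ker (psiR τ s) ⊓ LinearMap.ker (psiR τ w)) + 2 := by
        have h1 := Submodule.finrank_sup_add_finrank_inf_eq
          (LinearMap.ker (psiR τ s)) (LinearMap.ker (psiR τ w))
        have h2 : finrank K ↑(LinearMap.ker (psiR τ s) ⊔ LinearMap.ker (psiR τ w)) ≤ n := by
          have := Submodule.finrank_le (LinearMap.ker (psiR τ s) ⊔ LinearMap.ker (psiR τ w))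
          rwa [Module.finrank_fin_fun] at this
        omega
      have hD1 : finrank K ↑(LinearMap.ker (psiR τ s) ⊓ LinearMap.ker (psiR τ w)) ≤ 1 :=
        finrank_le_one_of_isotropic τ hτne hτ2 hss hDs hiso hdim_ge
      have hn3 : n = 3 := by omega
      obtain ⟨d, hdD, hd0⟩ : ∃ d ∈ LinearMap.ker (psiR τ s) ⊓ LinearMap.ker (psiR τ w),
          d ≠ 0 := by
        apply Submodule.exists_mem_ne_zero_of_ne_bot
        intro hbot
        rw [hbot, finrank_bot] at hdim_ge
        omega
      have hds : Psi (⇑τ) d s = 0 := by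
        have := hdD; rw [Submodule.mem_inf, mem_ker_psiR, mem_ker_psiR] at this; exact this.1
      have hdw : Psi (⇑τ) d w = 0 := by
        have := hdD; rw [Submodule.mem_inf, mem_ker_psiR, mem_ker_psiR] at this; exact this.2
      have hdd : Psi (⇑τ) d d = 0 := hD d hds hdw
      rcases hrhs with hcard | hn3' | hnd
      · -- main construction for |K| ≠ 4
        -- anisotropic vector orthogonal to s
        obtain ⟨a', ha's, ha'a'⟩ : ∃ a', Psi (⇑τ) a' s = 0 ∧ Psi (⇑τ) a' a' ≠ 0 := by
          by_contra hcon
          push_neg at hcon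
          have hiso' : ∀ x ∈ LinearMap.ker (psiR τ s), Psi (⇑τ) x x = 0 := by
            intro x hx
            exact hcon x (mem_ker_psiR τ |>.mp hx)
          have := finrank_le_one_of_isotropic τ hτne hτ2 hss
            (fun x hx => mem_ker_psiR τ |>.mp hx) hiso' (by omega)
          omega
        obtain ⟨b', hb'w, hb'b'⟩ : ∃ b', Psi (⇑τ) b' w = 0 ∧ Psi (⇑τ) b' b' ≠ 0 := by
          by_contra hcon
          push_neg at hcon
          have hiso' : ∀ x ∈ LinearMap.ker (psiR τ w), Psi (⇑τ) x x = 0 := by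
            intro x hx
            exact hcon x (mem_ker_psiR τ |>.mp hx)
          have := finrank_le_one_of_isotropic τ hτne hτ2 hww
            (fun x hx => mem_ker_psiR τ |>.mp hx) hiso' (by omega)
          omega
        -- d pairs nontrivially with a' and with b'
        have key : ∀ q x' : Fin n → K, Psi (⇑τ) q q ≠ 0 → Psi (⇑τ) x' q = 0 →
            Psi (⇑τ) x' x' ≠ 0 → Psi (⇑τ) d q = 0 → Psi (⇑τ) d x' = 0 → False := by
          intro q x' hq hx'q hx'x' hdq hdx'
          have hq0 : q ≠ 0 := by rintro rfl; exact hq (Psi_zero_left τ 0)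
          have hx'0 : x' ≠ 0 := by rintro rfl; exact hx'x' (Psi_zero_left τ 0)
          have hdnx : d ∉ Submodule.span K {x'} := by
            intro hmem
            obtain ⟨c, hc⟩ := Submodule.mem_span_singleton.mp hmem
            have hdd' := hdd
            rw [← hc, Psi_smul_left, Psi_smul_right] at hdd'
            rcases mul_eq_zero.mp hdd' with h | h
            · apply hd0; rw [← hc, h, zero_smul]
            · rcases mul_eq_zero.mp h with h' | h'
              · apply hd0
                have : c = 0 := by rw [← hτ2 c, h', map_zero]
                rw [← hc, this, zero_smul]
              · exact hx'x' h'
          have hsupker : Submodule.span K {x'} ⊔ Submodule.span K {d} =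
              LinearMap.ker (psiR τ q) := by
            apply Submodule.eq_of_le_of_finrank_le
            · apply sup_le
              · rw [Submodule.span_singleton_le_iff_mem, mem_ker_psiR]; exact hx'q
              · rw [Submodule.span_singleton_le_iff_mem, mem_ker_psiR]; exact hdq
            · rw [finrank_sup_of_inf_eq_bot (inf_span_singleton_eq_bot _ hdnx),
                finrank_span_singleton hx'0, finrank_span_singleton hd0]
              have := finrank_ker_psiR τ hτ2 hq0
              omega
          have hqk : q ∉ LinearMap.ker (psiR τ q) := by
            rw [mem_ker_psiR]; exact hq
          have htop : LinearMap.ker (psiR τ q) ⊔ Submodule.span K {q} = ⊤ := by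
            apply Submodule.eq_top_of_finrank_eq
            rw [Module.finrank_fin_fun,
              finrank_sup_of_inf_eq_bot (inf_span_singleton_eq_bot _ hqk),
              finrank_span_singleton hq0]
            have := finrank_ker_psiR τ hτ2 hq0
            omega
          apply hd0
          apply eq_zero_of_forall_psi_right τ
          intro v
          have hv : v ∈ LinearMap.ker (psiR τ q) ⊔ Submodule.span K {q} :=
            htop ▸ Submodule.mem_top
          obtain ⟨z, hz, z2, hz2, rfl⟩ := Submodule.mem_sup.mp hv
          obtain ⟨c, rfl⟩ := Submodule.mem_span_singleton.mp hz2
          rw [← hsupker] at hz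
          obtain ⟨y1, hy1, y2, hy2, rfl⟩ := Submodule.mem_sup.mp hz
          obtain ⟨α, rfl⟩ := Submodule.mem_span_singleton.mp hy1
          obtain ⟨β, rfl⟩ := Submodule.mem_span_singleton.mp hy2
          rw [Psi_add_right, Psi_add_right, Psi_smul_right, Psi_smul_right, Psi_smul_right,
            hdx', hdd, hdq]
          ring
        have hu : Psi (⇑τ) d a' ≠ 0 := fun h0 => key s a' hss ha's ha'a' hds h0
        have hv' : Psi (⇑τ) d b' ≠ 0 := fun h0 => key w b' hww hb'w hb'b' hdw h0
        exact exists_pair_construction τ hτne hτ2 hcard ha'a' ha's hb'b' hb'w hdd hds hdw hu hv'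
      · exact absurd hn3 hn3'
      · -- S ⊔ W nondegenerate forces d anisotropic : contradiction
        exfalso
        rw [hSs, hWw] at hnd
        have hwns : w ∉ Submodule.span K {s} := by
          intro hmem
          obtain ⟨c, hc⟩ := Submodule.mem_span_singleton.mp hmem
          have hle : LinearMap.ker (psiR τ s) ≤ LinearMap.ker (psiR τ w) := by
            intro z hz
            rw [mem_ker_psiR] at hz ⊢
            rw [← hc, Psi_smul_right, hz, mul_zero]
          rw [inf_eq_left.mpr hle] at hD1
          omega
        have hdperp : d ∈ perp (⇑τ) (Submodule.span K {s} ⊔ Submodule.span K {w}) := by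
          intro p hp
          obtain ⟨p1, hp1, p2, hp2, rfl⟩ := Submodule.mem_sup.mp hp
          obtain ⟨σ, rfl⟩ := Submodule.mem_span_singleton.mp hp1
          obtain ⟨ω, rfl⟩ := Submodule.mem_span_singleton.mp hp2
          rw [Psi_add_right, Psi_smul_right, Psi_smul_right, hds, hdw]
          ring
        have hdP : d ∉ Submodule.span K {s} ⊔ Submodule.span K {w} := by
          intro hmem
          apply hd0
          have : d ∈ (Submodule.span K {s} ⊔ Submodule.span K {w}) ⊓
              perp (⇑τ) (Submodule.span K {s} ⊔ Submodule.span K {w}) := ⟨hmem, hdperp⟩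
          rwa [hnd, Submodule.mem_bot] at this
        have hsw_inf : Submodule.span K {s} ⊓ Submodule.span K {w} = ⊥ :=
          inf_span_singleton_eq_bot _ hwns
        have hftop : (Submodule.span K {s} ⊔ Submodule.span K {w}) ⊔ Submodule.span K {d} = ⊤ := by
          apply Submodule.eq_top_of_finrank_eq
          rw [Module.finrank_fin_fun,
            finrank_sup_of_inf_eq_bot (inf_span_singleton_eq_bot _ hdP),
            finrank_sup_of_inf_eq_bot hsw_inf,
            finrank_span_singleton hs0, finrank_span_singleton hw0,
            finrank_span_singleton hd0, hn3]
        apply hd0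
        apply eq_zero_of_forall_psi_right τ
        intro v
        have hv : v ∈ (Submodule.span K {s} ⊔ Submodule.span K {w}) ⊔ Submodule.span K {d} :=
          hftop ▸ Submodule.mem_top
        obtain ⟨p, hp, z3, hz3, rfl⟩ := Submodule.mem_sup.mp hv
        obtain ⟨γ, rfl⟩ := Submodule.mem_span_singleton.mp hz3
        rw [Psi_add_right, Psi_smul_right, hdd, hdperp p hp]
        ring

end FramePaper
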